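/- Let I, J be finite types, let A, B be expectations on I × J, and let E1 : Matrix I I ℂ → Matrix I I ℂ and E2 : Matrix J J ℂ → Matrix J J ℂ be linear maps sending positive semidefinite matrices to positive semidefinite matrices. Then the judgment qRHL(A, E1, E2, B) holds if and only if for all unit vectors ψ1 : I → ℂ and ψ2 : J → ℂ there exists a separable positive semidefinite ρ' : Matrix (I × J) (I × J) ℂ such that tr₂(ρ') = E1(vecMulVec ψ1 (star ψ1)), tr₁(ρ') = E2(vecMulVec ψ2 (star ψ2)), and (star (ψ1 ⊗ ψ2) ⬝ᵥ (A.mulVec (ψ1 ⊗ ψ2))).re ≤ (Matrix.trace (B * ρ')).re, where ψ1 ⊗ ψ2 : I × J → ℂ is the vector (i,j) ↦ ψ1 i * ψ2 j. -/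

import Mathlib

open Matrix Kronecker ComplexOrder

noncomputable section

/-- Partial trace over the second factor: `tr₂(ρ) i i' = ∑ j, ρ (i,j) (i',j)`. -/
def trB {I J : Type*} [Fintype J] (ρ : Matrix (I × J) (I × J) ℂ) : Matrix I I ℂ :=
  Matrix.of fun i i' => ∑ j, ρ (i, j) (i', j)

/-- Partial trace over the first factor: `tr₁(ρ) j j' = ∑ i, ρ (i,j) (i,j')`. -/
def trA {I J : Type*} [Fintype I] (ρ : Matrix (I × J) (I × J) ℂ) : Matrix J J ℂ :=
  Matrix.of fun j j' => ∑ i, ρ (i, j) (i, j')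

/-- `ρ` is separable iff it is a finite sum of Kronecker products of
positive semidefinite matrices. -/
def Separable {I J : Type*} [Fintype I] [Fintype J]
    (ρ : Matrix (I × J) (I × J) ℂ) : Prop :=
  ∃ (n : ℕ) (σ : Fin n → Matrix I I ℂ) (τ : Fin n → Matrix J J ℂ),
    (∀ k, (σ k).PosSemidef) ∧ (∀ k, (τ k).PosSemidef) ∧ ρ = ∑ k, σ k ⊗ₖ τ k

/-- The expectation-qRHL judgment `qRHL(A, E1, E2, B)`. -/
def qRHL {I J : Type*} [Fintype I] [Fintype J]
    (A : Matrix (I × J) (I × J) ℂ)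
    (E1 : Matrix I I ℂ → Matrix I I ℂ) (E2 : Matrix J J ℂ → Matrix J J ℂ)
    (B : Matrix (I × J) (I × J) ℂ) : Prop :=
  ∀ ρ : Matrix (I × J) (I × J) ℂ, ρ.PosSemidef → Separable ρ →
    ∃ ρ' : Matrix (I × J) (I × J) ℂ, ρ'.PosSemidef ∧ Separable ρ' ∧
      trB ρ' = E1 (trB ρ) ∧ trA ρ' = E2 (trA ρ) ∧
      (Matrix.trace (A * ρ)).re ≤ (Matrix.trace (B * ρ')).re


section Aux

variable {I J : Type*} [Fintype I] [Fintype J]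

lemma dot_star_self_eq (v : I → ℂ) :
    star v ⬝ᵥ v = ((∑ i, Complex.normSq (v i) : ℝ) : ℂ) := by
  push_cast
  simp [dotProduct, Complex.normSq_eq_conj_mul_self, RCLike.star_def]

lemma psd_vecMulVec (v : I → ℂ) : (vecMulVec v (star v)).PosSemidef := by
  refine Matrix.PosSemidef.of_dotProduct_mulVec_nonneg ?_ ?_
  · ext i j
    simp [vecMulVec, conjTranspose_apply, mul_comm]
  · intro x
    have h1 : star x ⬝ᵥ (vecMulVec v (star v)) *ᵥ x
        = (∑ i, star (x i) * v i) * (∑ j, star (v j) * x j) := by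
      rw [Finset.sum_mul_sum]
      simp only [dotProduct, mulVec, vecMulVec, of_apply, Pi.star_apply, Finset.mul_sum]
      exact Finset.sum_congr rfl fun i _ => Finset.sum_congr rfl fun j _ => by ring
    have h2 : (∑ i, star (x i) * v i) = star (∑ j, star (v j) * x j) := by
      rw [star_sum]; exact Finset.sum_congr rfl fun i _ => by simp [mul_comm]
    rw [h1, h2]
    exact star_mul_self_nonneg _

lemma psd_rankOne {σ : Matrix I I ℂ} (h : σ.PosSemidef) :
    ∃ v : I → I → ℂ, σ = ∑ k, vecMulVec (v k) (star (v k)) := by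
  classical
  open scoped MatrixOrder in
  obtain ⟨B, hB⟩ := CStarAlgebra.nonneg_iff_eq_star_mul_self.mp h.nonneg
  rw [star_eq_conjTranspose] at hB; subst hB
  refine ⟨fun k i => star (B k i), ?_⟩
  ext i i'
  simp [Matrix.mul_apply, conjTranspose_apply, vecMulVec, Matrix.sum_apply]

lemma psd_add {M N : Matrix I I ℂ} (hM : M.PosSemidef) (hN : N.PosSemidef) :
    (M + N).PosSemidef :=
  Matrix.PosSemidef.of_dotProduct_mulVec_nonneg (hM.1.add hN.1) fun x => by
    rw [add_mulVec, dotProduct_add]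
    exact add_nonneg (hM.dotProduct_mulVec_nonneg x) (hN.dotProduct_mulVec_nonneg x)

lemma psd_sum {ι : Type*} (s : Finset ι) (f : ι → Matrix I I ℂ)
    (h : ∀ i ∈ s, (f i).PosSemidef) : (∑ i ∈ s, f i).PosSemidef :=
  Finset.sum_induction f _ (fun _ _ => psd_add) Matrix.PosSemidef.zero h

lemma psd_real_smul {c : ℝ} (hc : 0 ≤ c) {M : Matrix I I ℂ} (h : M.PosSemidef) :
    ((c : ℂ) • M).PosSemidef := by
  refine Matrix.PosSemidef.of_dotProduct_mulVec_nonneg ?_ ?_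
  · have heq : ((c : ℂ) • M)ᴴ = (c : ℂ) • M := by
      rw [conjTranspose_smul, h.1.eq]
      congr 1
      simp [Complex.star_def, Complex.conj_ofReal]
    exact heq
  · intro x
    have h0 := h.dotProduct_mulVec_nonneg x
    rw [Complex.nonneg_iff] at h0
    rw [smul_mulVec, dotProduct_smul, smul_eq_mul, Complex.nonneg_iff]
    refine ⟨?_, ?_⟩
    · rw [Complex.re_ofReal_mul]; exact mul_nonneg hc h0.1
    · rw [Complex.im_ofReal_mul, ← h0.2, mul_zero]

lemma trB_sum {ι : Type*} (s : Finset ι) (f : ι → Matrix (I × J) (I × J) ℂ) :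
    trB (∑ i ∈ s, f i) = ∑ i ∈ s, trB (f i) := by
  ext i i'
  simp only [trB, Matrix.sum_apply, of_apply]
  exact Finset.sum_comm

lemma trA_sum {ι : Type*} (s : Finset ι) (f : ι → Matrix (I × J) (I × J) ℂ) :
    trA (∑ i ∈ s, f i) = ∑ i ∈ s, trA (f i) := by
  ext j j'
  simp only [trA, Matrix.sum_apply, of_apply]
  exact Finset.sum_comm

lemma trB_smul (c : ℂ) (ρ : Matrix (I × J) (I × J) ℂ) : trB (c • ρ) = c • trB ρ := by
  ext i i'
  simp [trB, Finset.mul_sum]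

lemma trA_smul (c : ℂ) (ρ : Matrix (I × J) (I × J) ℂ) : trA (c • ρ) = c • trA ρ := by
  ext j j'
  simp [trA, Finset.mul_sum]

lemma trB_kron (σ : Matrix I I ℂ) (τ : Matrix J J ℂ) :
    trB (σ ⊗ₖ τ) = τ.trace • σ := by
  ext i i'
  simp only [trB, Matrix.trace, Matrix.diag, kroneckerMap_apply, of_apply,
    Matrix.smul_apply, smul_eq_mul]
  rw [← Finset.mul_sum, mul_comm]

lemma trA_kron (σ : Matrix I I ℂ) (τ : Matrix J J ℂ) :
    trA (σ ⊗ₖ τ) = σ.trace • τ := by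
  ext j j'
  simp only [trA, Matrix.trace, Matrix.diag, kroneckerMap_apply, of_apply,
    Matrix.smul_apply, smul_eq_mul]
  rw [← Finset.sum_mul, mul_comm]

lemma trace_vecMulVec (x : I → ℂ) :
    Matrix.trace (vecMulVec x (star x)) = star x ⬝ᵥ x := by
  simp [Matrix.trace, vecMulVec, Matrix.diag, dotProduct, mul_comm]

lemma trace_mul_vecMulVec (M : Matrix I I ℂ) (x : I → ℂ) :
    Matrix.trace (M * vecMulVec x (star x)) = star x ⬝ᵥ M *ᵥ x := by
  simp only [Matrix.trace, Matrix.diag, Matrix.mul_apply, vecMulVec, of_apply,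
    dotProduct, mulVec, Pi.star_apply, Finset.mul_sum]
  exact Finset.sum_congr rfl fun i _ => Finset.sum_congr rfl fun j _ => by ring

lemma kron_vecMulVec (v : I → ℂ) (w : J → ℂ) :
    vecMulVec v (star v) ⊗ₖ vecMulVec w (star w)
      = vecMulVec (fun p : I × J => v p.1 * w p.2)
          (star fun p : I × J => v p.1 * w p.2) := by
  ext ⟨i, j⟩ ⟨i', j'⟩
  simp [vecMulVec]
  ring

lemma separable_zero : Separable (0 : Matrix (I × J) (I × J) ℂ) :=
  ⟨0, Fin.elim0, Fin.elim0, fun k => k.elim0, fun k => k.elim0, by simp⟩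

lemma separable_add {ρ₁ ρ₂ : Matrix (I × J) (I × J) ℂ}
    (h₁ : Separable ρ₁) (h₂ : Separable ρ₂) : Separable (ρ₁ + ρ₂) := by
  obtain ⟨n₁, σ₁, τ₁, hσ₁, hτ₁, rfl⟩ := h₁
  obtain ⟨n₂, σ₂, τ₂, hσ₂, hτ₂, rfl⟩ := h₂
  refine ⟨n₁ + n₂, Fin.append σ₁ σ₂, Fin.append τ₁ τ₂, ?_, ?_, ?_⟩
  · intro k
    induction k using Fin.addCases with
    | left i => simpa [Fin.append_left] using hσ₁ i
    | right i => simpa [Fin.append_right] using hσ₂ i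
  · intro k
    induction k using Fin.addCases with
    | left i => simpa [Fin.append_left] using hτ₁ i
    | right i => simpa [Fin.append_right] using hτ₂ i
  · rw [Fin.sum_univ_add]
    simp [Fin.append_left, Fin.append_right]

lemma separable_sum {ι : Type*} (s : Finset ι) (f : ι → Matrix (I × J) (I × J) ℂ)
    (h : ∀ i ∈ s, Separable (f i)) : Separable (∑ i ∈ s, f i) :=
  Finset.sum_induction f _ (fun _ _ => separable_add) separable_zero h

lemma separable_smul {c : ℝ} (hc : 0 ≤ c) {ρ : Matrix (I × J) (I × J) ℂ}
    (h : Separable ρ) : Separable ((c : ℂ) • ρ) := by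
  obtain ⟨n, σ, τ, hσ, hτ, rfl⟩ := h
  refine ⟨n, fun k => (c : ℂ) • σ k, τ, fun k => psd_real_smul hc (hσ k), hτ, ?_⟩
  rw [Finset.smul_sum]
  exact Finset.sum_congr rfl fun k _ => (smul_kronecker _ _ _).symm

lemma sum_kron_sum {ι κ : Type*} (s : Finset ι) (t : Finset κ)
    (f : ι → Matrix I I ℂ) (g : κ → Matrix J J ℂ) :
    (∑ i ∈ s, f i) ⊗ₖ (∑ j ∈ t, g j) = ∑ i ∈ s, ∑ j ∈ t, f i ⊗ₖ g j := by
  ext ⟨a, b⟩ ⟨a', b'⟩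
  simp only [kroneckerMap_apply, Matrix.sum_apply, Finset.sum_mul_sum]

lemma exists_unit {v : I → ℂ} (hv : v ≠ 0) :
    ∃ (c : ℝ) (u : I → ℂ), 0 ≤ c ∧ star u ⬝ᵥ u = 1 ∧ star v ⬝ᵥ v = (c : ℂ) ∧
      vecMulVec v (star v) = (c : ℂ) • vecMulVec u (star u) := by
  set c : ℝ := ∑ i, Complex.normSq (v i) with hcdef
  have hdot : star v ⬝ᵥ v = (c : ℂ) := dot_star_self_eq v
  obtain ⟨i0, hi0⟩ := Function.ne_iff.mp hv
  have hcpos : 0 < c :=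
    Finset.sum_pos' (fun i _ => Complex.normSq_nonneg _)
      ⟨i0, Finset.mem_univ _, Complex.normSq_pos.mpr (by simpa using hi0)⟩
  set a : ℝ := Real.sqrt c with hadef
  have ha : (0 : ℝ) < a := Real.sqrt_pos.mpr hcpos
  have ha0 : (a : ℂ) ≠ 0 := by exact_mod_cast ha.ne'
  have ha2 : (a : ℂ) * (a : ℂ) = (c : ℂ) := by
    rw [← Complex.ofReal_mul, Real.mul_self_sqrt hcpos.le]
  refine ⟨c, fun i => (a : ℂ)⁻¹ * v i, hcpos.le, ?_, hdot, ?_⟩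
  · have : star (fun i => (a : ℂ)⁻¹ * v i) ⬝ᵥ (fun i => (a : ℂ)⁻¹ * v i)
        = (a : ℂ)⁻¹ * ((a : ℂ)⁻¹ * (star v ⬝ᵥ v)) := by
      simp only [dotProduct, Pi.star_apply, star_mul', Finset.mul_sum,
        star_inv₀, Complex.star_def, Complex.conj_ofReal]
      exact Finset.sum_congr rfl fun i _ => by ring
    rw [this, hdot, ← ha2]
    field_simp
  · ext i i'
    simp only [vecMulVec, of_apply, Matrix.smul_apply, Pi.star_apply, star_mul',
      star_inv₀, Complex.star_def, Complex.conj_ofReal, smul_eq_mul]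
    have : (c : ℂ) * ((a : ℂ)⁻¹ * (a : ℂ)⁻¹) = 1 := by
      rw [← ha2]; field_simp
    calc v i * (starRingEnd ℂ) (v i')
        = ((c : ℂ) * ((a : ℂ)⁻¹ * (a : ℂ)⁻¹)) * (v i * (starRingEnd ℂ) (v i')) := by
          rw [this, one_mul]
      _ = (c : ℂ) * ((a : ℂ)⁻¹ * v i * ((a : ℂ)⁻¹ * (starRingEnd ℂ) (v i'))) := by ring

lemma trB_zero : trB (0 : Matrix (I × J) (I × J) ℂ) = 0 := by
  ext i i'; simp [trB]

lemma trA_zero : trA (0 : Matrix (I × J) (I × J) ℂ) = 0 := by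
  ext j j'; simp [trA]

end Aux

/-- Characterization of expectation-qRHL via pure initial states
(Lemma `qrhl.pure` of the paper). -/
theorem qRHL_iff_pure {I J : Type*} [Fintype I] [Fintype J]
    (A B : Matrix (I × J) (I × J) ℂ) (hA : A.PosSemidef) (hB : B.PosSemidef)
    (E1 : Matrix I I ℂ →ₗ[ℂ] Matrix I I ℂ) (E2 : Matrix J J ℂ →ₗ[ℂ] Matrix J J ℂ)
    (hE1 : ∀ ρ : Matrix I I ℂ, ρ.PosSemidef → (E1 ρ).PosSemidef)
    (hE2 : ∀ σ : Matrix J J ℂ, σ.PosSemidef → (E2 σ).PosSemidef) :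
    qRHL A E1 E2 B ↔
      ∀ (ψ1 : I → ℂ) (ψ2 : J → ℂ), star ψ1 ⬝ᵥ ψ1 = 1 → star ψ2 ⬝ᵥ ψ2 = 1 →
        ∃ ρ' : Matrix (I × J) (I × J) ℂ, ρ'.PosSemidef ∧ Separable ρ' ∧
          trB ρ' = E1 (vecMulVec ψ1 (star ψ1)) ∧
          trA ρ' = E2 (vecMulVec ψ2 (star ψ2)) ∧
          (star (fun p : I × J => ψ1 p.1 * ψ2 p.2) ⬝ᵥ
              A.mulVec (fun p : I × J => ψ1 p.1 * ψ2 p.2)).re ≤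
            (Matrix.trace (B * ρ')).re := by
  constructor
  · -- forward direction
    intro hq ψ1 ψ2 h1 h2
    set ρ : Matrix (I × J) (I × J) ℂ :=
      vecMulVec ψ1 (star ψ1) ⊗ₖ vecMulVec ψ2 (star ψ2) with hρ
    have hψ : ρ = vecMulVec (fun p : I × J => ψ1 p.1 * ψ2 p.2)
        (star fun p : I × J => ψ1 p.1 * ψ2 p.2) := kron_vecMulVec ψ1 ψ2
    have hpsd : ρ.PosSemidef := by rw [hψ]; exact psd_vecMulVec _
    have hsep : Separable ρ :=
      ⟨1, fun _ => vecMulVec ψ1 (star ψ1), fun _ => vecMulVec ψ2 (star ψ2),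
        fun _ => psd_vecMulVec _, fun _ => psd_vecMulVec _, by simp [hρ]⟩
    obtain ⟨ρ', hp, hs, hb, ha, hle⟩ := hq ρ hpsd hsep
    refine ⟨ρ', hp, hs, ?_, ?_, ?_⟩
    · rw [hb]; congr 1
      rw [hρ, trB_kron, _root_.trace_vecMulVec, h2, one_smul]
    · rw [ha]; congr 1
      rw [hρ, trA_kron, _root_.trace_vecMulVec, h1, one_smul]
    · calc (star (fun p : I × J => ψ1 p.1 * ψ2 p.2) ⬝ᵥ
            A.mulVec (fun p : I × J => ψ1 p.1 * ψ2 p.2)).re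
          = (Matrix.trace (A * ρ)).re := by rw [hψ, trace_mul_vecMulVec]
        _ ≤ (Matrix.trace (B * ρ')).re := hle
  · -- backward direction
    intro h ρ hρpsd hρsep
    obtain ⟨n, σ, τ, hσ, hτ, rfl⟩ := hρsep
    choose v hv using fun k => psd_rankOne (hσ k)
    choose w hw using fun k => psd_rankOne (hτ k)
    have key : ∀ (x : I → ℂ) (y : J → ℂ),
        ∃ ρ' : Matrix (I × J) (I × J) ℂ, ρ'.PosSemidef ∧ Separable ρ' ∧
          trB ρ' = (star y ⬝ᵥ y) • E1 (vecMulVec x (star x)) ∧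
          trA ρ' = (star x ⬝ᵥ x) • E2 (vecMulVec y (star y)) ∧
          (Matrix.trace (A * (vecMulVec x (star x) ⊗ₖ vecMulVec y (star y)))).re
            ≤ (Matrix.trace (B * ρ')).re := by
      intro x y
      by_cases hx : x = 0
      · subst hx
        refine ⟨0, Matrix.PosSemidef.zero, separable_zero, ?_, ?_, ?_⟩
        · rw [trB_zero]
          have : vecMulVec (0 : I → ℂ) (star (0 : I → ℂ)) = 0 := by
            ext i i'; simp [vecMulVec]
          rw [this, map_zero, smul_zero]
        · rw [trA_zero]
          have : star (0 : I → ℂ) ⬝ᵥ (0 : I → ℂ) = 0 := by simp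
          rw [this, zero_smul]
        · have : vecMulVec (0 : I → ℂ) (star (0 : I → ℂ)) = 0 := by
            ext i i'; simp [vecMulVec]
          rw [this, zero_kronecker, mul_zero, mul_zero, Matrix.trace_zero]
      by_cases hy : y = 0
      · subst hy
        refine ⟨0, Matrix.PosSemidef.zero, separable_zero, ?_, ?_, ?_⟩
        · rw [trB_zero]
          have : star (0 : J → ℂ) ⬝ᵥ (0 : J → ℂ) = 0 := by simp
          rw [this, zero_smul]
        · rw [trA_zero]
          have : vecMulVec (0 : J → ℂ) (star (0 : J → ℂ)) = 0 := by
            ext j j'; simp [vecMulVec]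
          rw [this, map_zero, smul_zero]
        · have : vecMulVec (0 : J → ℂ) (star (0 : J → ℂ)) = 0 := by
            ext j j'; simp [vecMulVec]
          rw [this, kronecker_zero, mul_zero, mul_zero, Matrix.trace_zero]
      obtain ⟨cx, u, hcx, hu1, hxdot, hxeq⟩ := exists_unit hx
      obtain ⟨cy, z, hcy, hz1, hydot, hyeq⟩ := exists_unit hy
      obtain ⟨ρ₀, hp0, hs0, hb0, ha0, hle0⟩ := h u z hu1 hz1
      have hcxy : (0 : ℝ) ≤ cx * cy := mul_nonneg hcx hcy
      refine ⟨((cx * cy : ℝ) : ℂ) • ρ₀, psd_real_smul hcxy hp0,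
        separable_smul hcxy hs0, ?_, ?_, ?_⟩
      · rw [trB_smul, hb0, hxeq, hydot, LinearMap.map_smul, smul_smul]
        congr 1
        push_cast; ring
      · rw [trA_smul, ha0, hyeq, hxdot, LinearMap.map_smul, smul_smul]
        congr 1
        push_cast; ring
      · have hkron : vecMulVec x (star x) ⊗ₖ vecMulVec y (star y)
            = ((cx * cy : ℝ) : ℂ) • (vecMulVec u (star u) ⊗ₖ vecMulVec z (star z)) := by
          rw [hxeq, hyeq, smul_kronecker, kronecker_smul, smul_smul]
          congr 1
          push_cast; ring
        rw [hkron, Matrix.mul_smul, Matrix.trace_smul, Matrix.mul_smul,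
          Matrix.trace_smul, smul_eq_mul, smul_eq_mul, Complex.re_ofReal_mul,
          Complex.re_ofReal_mul]
        refine mul_le_mul_of_nonneg_left ?_ hcxy
        calc (Matrix.trace (A * (vecMulVec u (star u) ⊗ₖ vecMulVec z (star z)))).re
            = (star (fun p : I × J => u p.1 * z p.2) ⬝ᵥ
                A.mulVec (fun p : I × J => u p.1 * z p.2)).re := by
              rw [kron_vecMulVec, trace_mul_vecMulVec]
          _ ≤ (Matrix.trace (B * ρ₀)).re := hle0
    choose ρ' hp hs hb ha hle using
      fun t : Fin n × I × J => key (v t.1 t.2.1) (w t.1 t.2.2)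
    have hρdec : (∑ k, σ k ⊗ₖ τ k)
        = ∑ t : Fin n × I × J,
            vecMulVec (v t.1 t.2.1) (star (v t.1 t.2.1)) ⊗ₖ
              vecMulVec (w t.1 t.2.2) (star (w t.1 t.2.2)) := by
      rw [Fintype.sum_prod_type]
      refine Finset.sum_congr rfl fun k _ => ?_
      rw [Fintype.sum_prod_type, hv k, hw k, sum_kron_sum]
    refine ⟨∑ t : Fin n × I × J, ρ' t, psd_sum _ _ (fun t _ => hp t),
      separable_sum _ _ (fun t _ => hs t), ?_, ?_, ?_⟩
    · rw [trB_sum, hρdec, trB_sum, map_sum]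
      refine Finset.sum_congr rfl fun t _ => ?_
      rw [hb t, trB_kron, _root_.trace_vecMulVec, LinearMap.map_smul]
    · rw [trA_sum, hρdec, trA_sum, map_sum]
      refine Finset.sum_congr rfl fun t _ => ?_
      rw [ha t, trA_kron, _root_.trace_vecMulVec, LinearMap.map_smul]
    · rw [hρdec, Matrix.mul_sum, Matrix.trace_sum, Complex.re_sum,
        Matrix.mul_sum, Matrix.trace_sum, Complex.re_sum]
      exact Finset.sum_le_sum fun t _ => hle t
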